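/- Under the stated conditions, ‖(1/2) log(p/p₀)‖²_{P₀,B} ≤ (2 + M) · h(p,p₀)², that is, 2 ∫ (e^{|(1/2)log(p/p₀)|} − 1 − |(1/2)log(p/p₀)|) dP₀ ≤ (2 + M) ∫ (√p − √p₀)² dμ. -/

import Mathlib

open MeasureTheory Real ENNReal

/-- Padé lower bound for log on [1,3]. -/
lemma pade_log {u : ℝ} (hu : 1 ≤ u) (hu3 : u ≤ 3) : 2*(u-1)/(u+1) ≤ Real.log u := by
  have hup : (0:ℝ) < u + 1 := by linarith
  set a : ℝ := (u-1)/(u+1) with ha_def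
  have ha0 : 0 ≤ a := div_nonneg (by linarith) hup.le
  have ha2 : a ≤ 1/2 := by
    rw [ha_def, div_le_iff₀ hup]; linarith
  have hx0 : 0 ≤ 2*a := by linarith
  have hx1 : 2*a ≤ 1 := by linarith
  have hb := Real.exp_bound' hx0 hx1 (n := 4) (by norm_num)
  have hb' : Real.exp (2*a) ≤ 1 + 2*a + 2*a^2 + (4/3)*a^3 + (5/6)*a^4 := by
    refine hb.trans_eq ?_
    rw [Finset.sum_range_succ, Finset.sum_range_succ, Finset.sum_range_succ,
      Finset.sum_range_succ, Finset.sum_range_zero]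
    norm_num [Nat.factorial]
    ring
  have hua : u * (1 - a) = 1 + a := by
    rw [ha_def]; field_simp; ring
  have h1a : 0 < 1 - a := by linarith
  have hexp_le : Real.exp (2*a) ≤ u := by
    have h2 : (1 + 2*a + 2*a^2 + (4/3)*a^3 + (5/6)*a^4) * (1-a) ≤ 1 + a := by
      nlinarith [pow_nonneg ha0 3, pow_nonneg ha0 4, pow_nonneg ha0 5]
    calc Real.exp (2*a) ≤ 1 + 2*a + 2*a^2 + (4/3)*a^3 + (5/6)*a^4 := hb'
      _ ≤ (1+a)/(1-a) := by rw [le_div_iff₀ h1a]; exact h2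
      _ = u := by
          rw [eq_comm, eq_div_iff (ne_of_gt h1a)]; exact hua
  have hlog := Real.log_le_log (Real.exp_pos _) hexp_le
  rw [Real.log_exp] at hlog
  rw [mul_div_assoc, ← ha_def]
  exact hlog

/-- log lower bound 1 - 1/u ≤ log u for u > 0 -/
lemma log_lb {u : ℝ} (hu : 0 < u) : 1 - 1/u ≤ Real.log u := by
  have h := Real.log_le_sub_one_of_pos (x := u⁻¹) (by positivity)
  rw [Real.log_inv] at h
  rw [one_div]; linarith

/-- key1 : s ≥ 1 case -/
lemma key1 {s : ℝ} (hs : 1 ≤ s) : s - 1 - Real.log s ≤ (s-1)^2 := by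
  have h := log_lb (by linarith : (0:ℝ) < s)
  have h1 : s - 1 - Real.log s ≤ (s-1)^2/s := by
    have he : s - 1 - (1 - 1/s) = (s-1)^2/s := by field_simp
    linarith
  have h2 : (s-1)^2/s ≤ (s-1)^2 := by
    rw [div_le_iff₀ (by linarith : (0:ℝ) < s)]
    nlinarith [sq_nonneg (s-1)]
  linarith

/-- key2 : moderate u case -/
lemma key2 {u : ℝ} (hu : 1 ≤ u) (hu3 : u ≤ 3/2) :
    u - 1 - Real.log u ≤ (u-1)^2/u^2 := by
  have hp := pade_log hu (by linarith)
  have h1 : u - 1 - Real.log u ≤ (u-1)^2/(u+1) := by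
    have he : (u-1) - 2*(u-1)/(u+1) = (u-1)^2/(u+1) := by field_simp; ring
    linarith
  have h2 : (u-1)^2/(u+1) ≤ (u-1)^2/u^2 := by
    apply div_le_div_of_nonneg_left (sq_nonneg _) (by positivity)
    nlinarith
  linarith

/-- key3 : the B-region pointwise inequality -/
lemma key3 {u c M : ℝ} (hc : 1 ≤ c) (hM : 0 < M) (hu : 1 + 1/(2*c) ≤ u) :
    2*(u - 1 - Real.log u) + 1/c ≤ (2+M)*((u-1)^2/u^2) + u^2/M := by
  have hc0 : (0:ℝ) < c := by linarith
  have hu1 : (1:ℝ) < u := by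
    have : 0 < 1/(2*c) := by positivity
    linarith
  have hu0 : (0:ℝ) < u := by linarith
  have hamgm : 2*(u-1) ≤ M*((u-1)^2/u^2) + u^2/M := by
    rw [← sub_nonneg]
    have he : M*((u-1)^2/u^2) + u^2/M - 2*(u-1) = (M*(u-1) - u^2)^2/(M*u^2) := by
      field_simp; ring
    rw [he]; positivity
  have hcu : 1/c ≤ 2*(u-1) := by
    have h2c : 1/(2*c) ≤ u - 1 := by linarith
    have he : 1/c = 2*(1/(2*c)) := by field_simp
    linarith
  by_cases hu32 : u ≤ 3/2
  · have hkey2 := key2 hu1.le hu32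
    nlinarith [hkey2, hamgm, hcu]
  · push_neg at hu32
    have hc1 : 1/c ≤ 1 := by rw [div_le_one hc0]; exact hc
    by_cases hu3 : u ≤ 3
    · have hp := pade_log hu1.le hu3
      have h1 : u - 1 - Real.log u ≤ (u-1)^2/(u+1) := by
        have he : (u-1) - 2*(u-1)/(u+1) = (u-1)^2/(u+1) := by field_simp; ring
        linarith
      have hpoly : 2*((u-1)^2/(u+1)) + 1 ≤ 2*((u-1)^2/u^2) + 2*(u-1) := by
        have hd : 2*((u-1)^2/u^2) + 2*(u-1) - (2*((u-1)^2/(u+1)) + 1)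
            = (5*u^3 - 7*u^2 - 2*u + 2)/(u^2*(u+1)) := by
          field_simp; ring
        have hnum : 0 ≤ 5*u^3 - 7*u^2 - 2*u + 2 := by nlinarith [sq_nonneg (u - 3/2)]
        have hpos : 0 ≤ (5*u^3 - 7*u^2 - 2*u + 2)/(u^2*(u+1)) := by positivity
        linarith
      nlinarith [hamgm, h1, hpoly]
    · push_neg at hu3
      have hl := log_lb hu0
      have h1 : u - 1 - Real.log u ≤ (u-1)^2/u := by
        have he2 : u - 2 + 1/u = (u-1)^2/u := by field_simp; ring
        linarith
      have hpoly : 2*((u-1)^2/u) + 1 ≤ 2*((u-1)^2/u^2) + 2*(u-1) := by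
        have hd : 2*((u-1)^2/u^2) + 2*(u-1) - (2*((u-1)^2/u) + 1)
            = (3*u^2 - 6*u + 2)/(u^2) := by field_simp; ring
        have hnum : 0 ≤ 3*u^2 - 6*u + 2 := by nlinarith
        have hpos : 0 ≤ (3*u^2 - 6*u + 2)/(u^2) := by positivity
        linarith
      nlinarith [hamgm, h1, hpoly]

/-- complement-region pointwise real inequality -/
lemma compl_real {a b w : ℝ} (ha : 0 < a) (hb : 0 < b) (hw : 1 ≤ w) (hw32 : w ≤ 3/2)
    (hlt : b/a < w^2) :
    Real.exp |1/2 * Real.log (a/b)| - 1 - |1/2 * Real.log (a/b)|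
      ≤ (Real.sqrt a - Real.sqrt b)^2 / b := by
  have hr : 0 < a/b := by positivity
  have hsb : 0 < Real.sqrt b := Real.sqrt_pos.2 hb
  have hs : Real.sqrt (a/b) = Real.sqrt a / Real.sqrt b := Real.sqrt_div ha.le b
  have hsq : (Real.sqrt a - Real.sqrt b)^2 / b = (Real.sqrt (a/b) - 1)^2 := by
    rw [hs]
    have h1 : Real.sqrt a / Real.sqrt b - 1 = (Real.sqrt a - Real.sqrt b)/Real.sqrt b := by
      field_simp
    rw [h1, div_pow, Real.sq_sqrt hb.le]
  have hhalf : (1:ℝ)/2 * Real.log (a/b) = Real.log (Real.sqrt (a/b)) := by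
    rw [Real.log_sqrt hr.le]; ring
  rw [hsq, hhalf]
  by_cases hab : 1 ≤ a/b
  · have hs1 : 1 ≤ Real.sqrt (a/b) := by
      rw [show (1:ℝ) = Real.sqrt 1 by simp]
      exact Real.sqrt_le_sqrt hab
    have hlogpos : 0 ≤ Real.log (Real.sqrt (a/b)) := Real.log_nonneg hs1
    rw [abs_of_nonneg hlogpos, Real.exp_log (by linarith : (0:ℝ) < Real.sqrt (a/b))]
    exact key1 hs1
  · push_neg at hab
    set u : ℝ := Real.sqrt (b/a) with hu_def
    have hba1 : 1 < b/a := by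
      rw [lt_div_iff₀ ha]
      rw [div_lt_one hb] at hab
      linarith
    have hu1 : 1 < u := by
      rw [hu_def, show (1:ℝ) = Real.sqrt 1 by simp]
      exact Real.sqrt_lt_sqrt (by norm_num) hba1
    have huinv : Real.sqrt (a/b) = u⁻¹ := by
      rw [hu_def, ← Real.sqrt_inv]
      congr 1
      rw [inv_div]
    have hlogneg : Real.log (Real.sqrt (a/b)) = - Real.log u := by
      rw [huinv, Real.log_inv]
    have hupos : (0:ℝ) < u := by linarith
    rw [hlogneg, abs_neg, abs_of_nonneg (Real.log_nonneg hu1.le),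
      Real.exp_log hupos, huinv]
    have huw : u < w := by
      rw [hu_def]
      calc Real.sqrt (b/a) < Real.sqrt (w^2) := Real.sqrt_lt_sqrt (by positivity) hlt
        _ = w := Real.sqrt_sq (by linarith)
    have hk := key2 hu1.le (by linarith : u ≤ 3/2)
    have he : (u⁻¹ - 1)^2 = (u-1)^2/u^2 := by
      field_simp
      ring
    rw [he]
    exact hk

/-- B-region pointwise real inequality -/
lemma breg_real {a b c M : ℝ} (ha : 0 < a) (hb : 0 < b) (hc : 1 ≤ c) (hM : 0 < M)
    (hge : (1+1/(2*c))^2 ≤ b/a) :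
    2*(Real.exp |1/2 * Real.log (a/b)| - 1 - |1/2 * Real.log (a/b)|) + 1/c
      ≤ (2+M) * ((Real.sqrt a - Real.sqrt b)^2 / b) + (b/a)/M := by
  have hc0 : (0:ℝ) < c := by linarith
  have hu₀ : (1:ℝ) < 1 + 1/(2*c) := by
    have : (0:ℝ) < 1/(2*c) := by positivity
    linarith
  have hr : 0 < a/b := by positivity
  have hsb : 0 < Real.sqrt b := Real.sqrt_pos.2 hb
  have hs : Real.sqrt (a/b) = Real.sqrt a / Real.sqrt b := Real.sqrt_div ha.le b
  have hsq : (Real.sqrt a - Real.sqrt b)^2 / b = (Real.sqrt (a/b) - 1)^2 := by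
    rw [hs]
    have h1 : Real.sqrt a / Real.sqrt b - 1 = (Real.sqrt a - Real.sqrt b)/Real.sqrt b := by
      field_simp
    rw [h1, div_pow, Real.sq_sqrt hb.le]
  have hhalf : (1:ℝ)/2 * Real.log (a/b) = Real.log (Real.sqrt (a/b)) := by
    rw [Real.log_sqrt hr.le]; ring
  rw [hsq, hhalf]
  set u : ℝ := Real.sqrt (b/a) with hu_def
  have hba1 : (1:ℝ) < b/a := lt_of_lt_of_le (by nlinarith : (1:ℝ) < (1+1/(2*c))^2) hge
  have hu1 : 1 < u := by
    rw [hu_def, show (1:ℝ) = Real.sqrt 1 by simp]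
    exact Real.sqrt_lt_sqrt (by norm_num) hba1
  have hupos : (0:ℝ) < u := by linarith
  have huinv : Real.sqrt (a/b) = u⁻¹ := by
    rw [hu_def, ← Real.sqrt_inv]
    congr 1
    rw [inv_div]
  have hlogneg : Real.log (Real.sqrt (a/b)) = - Real.log u := by
    rw [huinv, Real.log_inv]
  rw [hlogneg, abs_neg, abs_of_nonneg (Real.log_nonneg hu1.le),
    Real.exp_log hupos, huinv]
  have hu2 : u^2 = b/a := Real.sq_sqrt (by positivity)
  have hulb : 1 + 1/(2*c) ≤ u := by
    rw [hu_def]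
    calc 1 + 1/(2*c) = Real.sqrt ((1+1/(2*c))^2) := (Real.sqrt_sq (by linarith)).symm
      _ ≤ Real.sqrt (b/a) := Real.sqrt_le_sqrt hge
  have hk := key3 hc hM hulb
  have he : (u⁻¹ - 1)^2 = (u-1)^2/u^2 := by
    field_simp
    ring
  rw [he, ← hu2]
  exact hk

/-- ENNReal version of the complement pointwise bound -/
lemma compl_ennreal {a b c : ℝ} (ha : 0 < a) (hb : 0 < b) (hc : 1 ≤ c)
    (hlt : b/a < (1 + 1/(2*c))^2) :
    ENNReal.ofReal (Real.exp |1/2 * Real.log (a/b)| - 1 - |1/2 * Real.log (a/b)|)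
      ≤ ENNReal.ofReal ((Real.sqrt a - Real.sqrt b)^2 / b) := by
  have hc0 : (0:ℝ) < c := by linarith
  have hw : (1:ℝ) ≤ 1 + 1/(2*c) := by
    have h0 : (0:ℝ) < 1/(2*c) := by positivity
    linarith
  have hw32 : 1 + 1/(2*c) ≤ 3/2 := by
    have h1 : 1/(2*c) ≤ 1/2 := by
      apply div_le_div_of_nonneg_left (by norm_num) (by norm_num) (by linarith)
    linarith
  exact ENNReal.ofReal_le_ofReal (compl_real ha hb hw hw32 hlt)

/-- ENNReal version of the B-region pointwise bound -/
lemma breg_ennreal {a b c M : ℝ} (ha : 0 < a) (hb : 0 < b) (hc : 1 ≤ c) (hM : 0 < M)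
    (hge : (1+1/(2*c))^2 ≤ b/a) :
    2 * ENNReal.ofReal (Real.exp |1/2 * Real.log (a/b)| - 1 - |1/2 * Real.log (a/b)|)
        + ENNReal.ofReal (1/c)
      ≤ ENNReal.ofReal (2+M) * ENNReal.ofReal ((Real.sqrt a - Real.sqrt b)^2 / b)
        + ENNReal.ofReal (1/M) * ENNReal.ofReal (b/a) := by
  have hF0 : 0 ≤ Real.exp |1/2 * Real.log (a/b)| - 1 - |1/2 * Real.log (a/b)| := by
    have h1 := Real.add_one_le_exp |1/2 * Real.log (a/b)|
    linarith
  have hH0 : 0 ≤ (Real.sqrt a - Real.sqrt b)^2 / b := by positivity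
  have hkey := breg_real ha hb hc hM hge
  have hba0 : (0:ℝ) ≤ b/a := by positivity
  calc 2 * ENNReal.ofReal (Real.exp |1/2 * Real.log (a/b)| - 1 - |1/2 * Real.log (a/b)|)
        + ENNReal.ofReal (1/c)
      = ENNReal.ofReal (2 * (Real.exp |1/2 * Real.log (a/b)| - 1 - |1/2 * Real.log (a/b)|)
          + 1/c) := by
        rw [ENNReal.ofReal_add (by linarith) (by positivity),
          ENNReal.ofReal_mul (by norm_num : (0:ℝ) ≤ 2), ENNReal.ofReal_ofNat]
    _ ≤ ENNReal.ofReal ((2+M) * ((Real.sqrt a - Real.sqrt b)^2 / b) + (1/M)*(b/a)) := by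
        apply ENNReal.ofReal_le_ofReal
        have he : (b/a)/M = 1/M*(b/a) := by ring
        linarith
    _ = ENNReal.ofReal (2+M) * ENNReal.ofReal ((Real.sqrt a - Real.sqrt b)^2 / b)
        + ENNReal.ofReal (1/M) * ENNReal.ofReal (b/a) := by
        rw [ENNReal.ofReal_add (by positivity) (by positivity),
          ENNReal.ofReal_mul (by linarith : (0:ℝ) ≤ 2+M),
          ENNReal.ofReal_mul (by positivity : (0:ℝ) ≤ 1/M)]

/-- Under the stated conditions, the Bernstein-norm bound
`‖(1/2) log(p/p₀)‖²_{P₀,B} ≤ (2 + M) h(p,p₀)²`, i.e.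
`2 ∫ (e^{|(1/2)log(p/p₀)|} - 1 - |(1/2)log(p/p₀)|) dP₀ ≤ (2 + M) ∫ (√p - √p₀)² dμ`. -/
theorem bernstein_norm_half_log_ratio_le_hellinger
    {X : Type*} [MeasurableSpace X] (μ : Measure X) [SigmaFinite μ]
    (p p₀ : X → ℝ) (hp : Measurable p) (hp₀ : Measurable p₀)
    (hpnn : ∀ x, 0 ≤ p x) (hp₀nn : ∀ x, 0 ≤ p₀ x)
    (hpden : ∫⁻ x, ENNReal.ofReal (p x) ∂μ = 1)
    (hp₀den : ∫⁻ x, ENNReal.ofReal (p₀ x) ∂μ = 1)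
    (P₀ : Measure X) (hP₀ : P₀ = μ.withDensity fun x => ENNReal.ofReal (p₀ x))
    (hzero : P₀ {x | p x = 0} = 0)
    (hfin : ∫⁻ x, ENNReal.ofReal (p₀ x / p x) ∂P₀ < ⊤)
    (M : ℝ) (hM : 0 ≤ M)
    (hMbound : ∃ c : ℝ, 1 ≤ c ∧
      (P₀ {x | (1 + 1 / (2 * c)) ^ 2 ≤ p₀ x / p x} = 0 ∨
        ENNReal.ofReal c *
            (∫⁻ x in {x | (1 + 1 / (2 * c)) ^ 2 ≤ p₀ x / p x},
              ENNReal.ofReal (p₀ x / p x) ∂P₀) ≤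
          ENNReal.ofReal M * P₀ {x | (1 + 1 / (2 * c)) ^ 2 ≤ p₀ x / p x})) :
    2 * ∫⁻ x, ENNReal.ofReal
          (Real.exp |1 / 2 * Real.log (p x / p₀ x)| - 1 -
            |1 / 2 * Real.log (p x / p₀ x)|) ∂P₀ ≤
      ENNReal.ofReal (2 + M) *
        ∫⁻ x, ENNReal.ofReal ((Real.sqrt (p x) - Real.sqrt (p₀ x)) ^ 2) ∂μ := by
  
  obtain ⟨c, hc, hMb⟩ := hMbound
  have hc0 : (0:ℝ) < c := by linarith
  set B : Set X := {x | (1 + 1 / (2 * c)) ^ 2 ≤ p₀ x / p x} with hB_def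
  have hB : MeasurableSet B := measurableSet_le measurable_const (hp₀.div hp)
  set fI : X → ℝ≥0∞ := fun x => ENNReal.ofReal
      (Real.exp |1 / 2 * Real.log (p x / p₀ x)| - 1 -
        |1 / 2 * Real.log (p x / p₀ x)|) with hfI_def
  set hI : X → ℝ≥0∞ := fun x =>
      ENNReal.ofReal ((Real.sqrt (p x) - Real.sqrt (p₀ x)) ^ 2 / p₀ x) with hhI_def
  set rI : X → ℝ≥0∞ := fun x => ENNReal.ofReal (p₀ x / p x) with hrI_def
  have mfI : Measurable fI := by
    rw [hfI_def]
    exact ((((measurable_const.mul (hp.div hp₀).log).abs.exp).sub measurable_const).sub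
      (measurable_const.mul (hp.div hp₀).log).abs).ennreal_ofReal
  have mhI : Measurable hI := by
    rw [hhI_def]
    exact (((hp.sqrt.sub hp₀.sqrt).pow_const 2).div hp₀).ennreal_ofReal
  have mrI : Measurable rI := by
    rw [hrI_def]
    exact (hp₀.div hp).ennreal_ofReal
  have hP₀univ : P₀ Set.univ = 1 := by
    rw [hP₀, withDensity_apply _ MeasurableSet.univ, Measure.restrict_univ]
    exact hp₀den
  have hPBfin : ENNReal.ofReal (1/c) * P₀ B ≠ ⊤ := by
    apply ENNReal.mul_ne_top ENNReal.ofReal_ne_top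
    have h1 : P₀ B ≤ 1 := hP₀univ ▸ measure_mono (Set.subset_univ B)
    exact ne_top_of_le_ne_top ENNReal.one_ne_top h1
  have hae_p : ∀ᵐ x ∂P₀, 0 < p x := by
    rw [ae_iff]
    have hset : {x | ¬ 0 < p x} = {x | p x = 0} := by
      ext x
      simp only [Set.mem_setOf_eq, not_lt]
      exact ⟨fun h' => le_antisymm h' (hpnn x), fun h' => le_of_eq h'⟩
    rw [hset]
    exact hzero
  have hae_p₀ : ∀ᵐ x ∂P₀, 0 < p₀ x := by
    have hs : MeasurableSet {x | p₀ x = 0} := hp₀ (measurableSet_singleton 0)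
    have h0 : P₀ {x | p₀ x = 0} = 0 := by
      rw [hP₀, withDensity_apply _ hs]
      have hz : ∀ᵐ x ∂μ, x ∈ {x | p₀ x = 0} → ENNReal.ofReal (p₀ x) = (fun _ => (0:ℝ≥0∞)) x :=
        ae_of_all _ (fun x hx => by
          have : p₀ x = 0 := hx
          simp [this])
      rw [setLIntegral_congr_fun_ae hs hz, lintegral_zero]
    rw [ae_iff]
    have hset : {x | ¬ 0 < p₀ x} = {x | p₀ x = 0} := by
      ext x
      simp only [Set.mem_setOf_eq, not_lt]
      exact ⟨fun h' => le_antisymm h' (hp₀nn x), fun h' => le_of_eq h'⟩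
    rw [hset]
    exact h0
  -- Step A : ∫ hI dP₀ ≤ RHS μ-integral
  have hstepA : ∫⁻ x, hI x ∂P₀ ≤
      ∫⁻ x, ENNReal.ofReal ((Real.sqrt (p x) - Real.sqrt (p₀ x)) ^ 2) ∂μ := by
    rw [hP₀, lintegral_withDensity_eq_lintegral_mul μ hp₀.ennreal_ofReal mhI]
    apply lintegral_mono
    intro x
    simp only [Pi.mul_apply]
    by_cases hx : p₀ x = 0
    · simp [hhI_def, hx]
    · rw [hhI_def, ← ENNReal.ofReal_mul (hp₀nn x)]
      apply ENNReal.ofReal_le_ofReal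
      rw [mul_comm, div_mul_cancel₀ _ hx]
  -- complement bound
  have hcompl : ∫⁻ x in Bᶜ, fI x ∂P₀ ≤ ∫⁻ x in Bᶜ, hI x ∂P₀ := by
    apply setLIntegral_mono_ae' hB.compl
    filter_upwards [hae_p, hae_p₀] with x hpx hp₀x hxc
    have hxB : ¬ ((1 + 1 / (2 * c)) ^ 2 ≤ p₀ x / p x) := hxc
    have hlt : p₀ x / p x < (1 + 1/(2*c))^2 := lt_of_not_ge hxB
    exact compl_ennreal hpx hp₀x hc hlt
  -- B-region bound
  have hBmain : 2 * ∫⁻ x in B, fI x ∂P₀ ≤ ENNReal.ofReal (2+M) * ∫⁻ x in B, hI x ∂P₀ := by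
    by_cases hPB0 : P₀ B = 0
    · have hz : ∫⁻ x in B, fI x ∂P₀ = 0 := by
        rw [Measure.restrict_eq_zero.mpr hPB0, lintegral_zero_measure]
      rw [hz, mul_zero]
      exact zero_le
    · rcases hMb with hPB0' | hMb
      · exact absurd hPB0' hPB0
      have hMpos : 0 < M := by
        by_contra hMle
        push_neg at hMle
        have hM0 : M = 0 := le_antisymm hMle hM
        rw [hM0, ENNReal.ofReal_zero, zero_mul] at hMb
        have hint0 : ∫⁻ x in B, rI x ∂P₀ = 0 := by
          have h00 := le_antisymm hMb zero_le
          rcases mul_eq_zero.mp h00 with h' | h'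
          · exact absurd h' (by
              simp only [ENNReal.ofReal_eq_zero, not_le]
              linarith)
          · exact h'
        have hlow : ENNReal.ofReal ((1 + 1/(2*c))^2) * P₀ B ≤ ∫⁻ x in B, rI x ∂P₀ := by
          rw [← setLIntegral_const B (ENNReal.ofReal ((1 + 1/(2*c))^2))]
          apply setLIntegral_mono' hB
          intro x hx
          have hx' : (1 + 1 / (2 * c)) ^ 2 ≤ p₀ x / p x := hx
          exact ENNReal.ofReal_le_ofReal hx'
        rw [hint0] at hlow
        have hPB00 : P₀ B = 0 := by
          have h00 := le_antisymm hlow zero_le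
          rcases mul_eq_zero.mp h00 with h' | h'
          · refine absurd h' ?_
            simp only [ENNReal.ofReal_eq_zero, not_le]
            positivity
          · exact h'
        exact hPB0 hPB00
      -- pointwise a.e. inequality on B, integrated
      have hmono : ∫⁻ x in B, (2 * fI x + ENNReal.ofReal (1/c)) ∂P₀ ≤
          ∫⁻ x in B, (ENNReal.ofReal (2+M) * hI x + ENNReal.ofReal (1/M) * rI x) ∂P₀ := by
        apply setLIntegral_mono_ae' hB
        filter_upwards [hae_p, hae_p₀] with x hpx hp₀x hxB
        have hge : (1 + 1/(2*c))^2 ≤ p₀ x / p x := hxB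
        exact breg_ennreal hpx hp₀x hc hMpos hge
      have hL : ∫⁻ x in B, (2 * fI x + ENNReal.ofReal (1/c)) ∂P₀ =
          2 * ∫⁻ x in B, fI x ∂P₀ + ENNReal.ofReal (1/c) * P₀ B := by
        rw [lintegral_add_right _ measurable_const, lintegral_const_mul 2 mfI,
          setLIntegral_const]
      have hR : ∫⁻ x in B, (ENNReal.ofReal (2+M) * hI x + ENNReal.ofReal (1/M) * rI x) ∂P₀ =
          ENNReal.ofReal (2+M) * ∫⁻ x in B, hI x ∂P₀
            + ENNReal.ofReal (1/M) * ∫⁻ x in B, rI x ∂P₀ := by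
        rw [lintegral_add_right _ (mrI.const_mul _), lintegral_const_mul _ mhI,
          lintegral_const_mul _ mrI]
      have hofc : ENNReal.ofReal (1/(c*M)) * ENNReal.ofReal c = ENNReal.ofReal (1/M) := by
        rw [← ENNReal.ofReal_mul (by positivity)]
        congr 1
        field_simp
      have hofM : ENNReal.ofReal (1/(c*M)) * ENNReal.ofReal M = ENNReal.ofReal (1/c) := by
        rw [← ENNReal.ofReal_mul (by positivity)]
        congr 1
        field_simp
      have hMb' : ENNReal.ofReal (1/M) * ∫⁻ x in B, rI x ∂P₀ ≤ ENNReal.ofReal (1/c) * P₀ B := by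
        calc ENNReal.ofReal (1/M) * ∫⁻ x in B, rI x ∂P₀
            = ENNReal.ofReal (1/(c*M)) * (ENNReal.ofReal c * ∫⁻ x in B, rI x ∂P₀) := by
              rw [← mul_assoc, hofc]
          _ ≤ ENNReal.ofReal (1/(c*M)) * (ENNReal.ofReal M * P₀ B) := mul_le_mul_right hMb _
          _ = ENNReal.ofReal (1/c) * P₀ B := by rw [← mul_assoc, hofM]
      have hchain : 2 * ∫⁻ x in B, fI x ∂P₀ + ENNReal.ofReal (1/c) * P₀ B ≤
          ENNReal.ofReal (2+M) * ∫⁻ x in B, hI x ∂P₀ + ENNReal.ofReal (1/c) * P₀ B := by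
        calc 2 * ∫⁻ x in B, fI x ∂P₀ + ENNReal.ofReal (1/c) * P₀ B
            = ∫⁻ x in B, (2 * fI x + ENNReal.ofReal (1/c)) ∂P₀ := hL.symm
          _ ≤ ∫⁻ x in B, (ENNReal.ofReal (2+M) * hI x + ENNReal.ofReal (1/M) * rI x) ∂P₀ := hmono
          _ = ENNReal.ofReal (2+M) * ∫⁻ x in B, hI x ∂P₀
              + ENNReal.ofReal (1/M) * ∫⁻ x in B, rI x ∂P₀ := hR
          _ ≤ ENNReal.ofReal (2+M) * ∫⁻ x in B, hI x ∂P₀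
              + ENNReal.ofReal (1/c) * P₀ B := add_le_add_right hMb' _
      exact (ENNReal.add_le_add_iff_right hPBfin).1 hchain
  have h2le : (2:ℝ≥0∞) ≤ ENNReal.ofReal (2+M) := by
    calc (2:ℝ≥0∞) = ENNReal.ofReal 2 := by simp
      _ ≤ ENNReal.ofReal (2+M) := ENNReal.ofReal_le_ofReal (by linarith)
  calc 2 * ∫⁻ x, fI x ∂P₀
      = 2 * (∫⁻ x in B, fI x ∂P₀ + ∫⁻ x in Bᶜ, fI x ∂P₀) := by
        rw [lintegral_add_compl _ hB]
    _ = 2 * ∫⁻ x in B, fI x ∂P₀ + 2 * ∫⁻ x in Bᶜ, fI x ∂P₀ := by rw [mul_add]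
    _ ≤ ENNReal.ofReal (2+M) * ∫⁻ x in B, hI x ∂P₀
        + ENNReal.ofReal (2+M) * ∫⁻ x in Bᶜ, hI x ∂P₀ := by
        apply add_le_add hBmain
        calc 2 * ∫⁻ x in Bᶜ, fI x ∂P₀ ≤ 2 * ∫⁻ x in Bᶜ, hI x ∂P₀ := mul_le_mul_right hcompl 2
          _ ≤ ENNReal.ofReal (2+M) * ∫⁻ x in Bᶜ, hI x ∂P₀ := mul_le_mul_left h2le _
    _ = ENNReal.ofReal (2+M) * ∫⁻ x, hI x ∂P₀ := by
        rw [← mul_add, lintegral_add_compl _ hB]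
    _ ≤ ENNReal.ofReal (2+M) *
        ∫⁻ x, ENNReal.ofReal ((Real.sqrt (p x) - Real.sqrt (p₀ x)) ^ 2) ∂μ :=
        mul_le_mul_right hstepA _
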